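/- Let P be the two-point minimal distribution with support {(a,b),(-a,-b)}, weights e^{±a/2}/(2cosh(a/2)), where a = 2g(⟨x⟩/2) and b = a⟨y⟩/⟨x⟩. Then Var(y) = ⟨y⟩²·f(⟨x⟩), where f(x) = csch²(g(x/2)) and g is the inverse of t ↦ t·tanh(t). -/

import Mathlib

open Real

/-- For the two-point minimal distribution with support `{(a,b), (-a,-b)}` and weights
`exp(±a/2)/(2 cosh(a/2))`, where `a = 2 g(⟨x⟩/2)` and `b = a ⟨y⟩/⟨x⟩` (`g` being the
inverse of `t ↦ t tanh t`), the variance of `y` equals `⟨y⟩² f(⟨x⟩)` with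
`f x = csch²(g (x/2))`. -/
theorem minimal_distribution_saturates_TUR
    (g : ℝ → ℝ)
    (hg : ∀ x ∈ Set.Ici (0 : ℝ), g x ∈ Set.Ici (0 : ℝ) ∧ g x * Real.tanh (g x) = x)
    (qx qy : ℝ) (hqx : 0 < qx)
    (a b : ℝ) (ha : a = 2 * g (qx / 2)) (hb : b = a * qy / qx)
    (pPlus pMinus : ℝ)
    (hpPlus : pPlus = Real.exp (a / 2) / (2 * Real.cosh (a / 2)))
    (hpMinus : pMinus = Real.exp (-(a / 2)) / (2 * Real.cosh (a / 2))) :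
    (pPlus * b ^ 2 + pMinus * (-b) ^ 2) - (pPlus * b + pMinus * (-b)) ^ 2
      = qy ^ 2 * (1 / Real.sinh (g (qx / 2))) ^ 2 := by
  obtain ⟨ht0, htt⟩ := hg (qx / 2) (Set.mem_Ici.mpr (by positivity))
  set t := g (qx / 2) with ht
  have htne : t ≠ 0 := by
    intro h
    rw [h, Real.tanh_zero, mul_zero] at htt
    linarith
  have hsh : Real.sinh t ≠ 0 := by
    simpa [Real.sinh_eq_zero] using htne
  have hch : Real.cosh t > 0 := Real.cosh_pos t
  have htanh : Real.tanh t = Real.sinh t / Real.cosh t := Real.tanh_eq_sinh_div_cosh t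
  have ha2 : a / 2 = t := by rw [ha]; ring
  have hqx2 : qx = 2 * (t * Real.tanh t) := by linarith
  have hb' : b = qy / Real.tanh t := by
    have htanhne : Real.tanh t ≠ 0 := by
      rw [htanh]; exact div_ne_zero hsh (ne_of_gt hch)
    rw [hb, ha, hqx2]
    field_simp
  have hpyth : Real.cosh t ^ 2 - Real.sinh t ^ 2 = 1 := Real.cosh_sq_sub_sinh_sq t
  rw [hpPlus, hpMinus, ha2, hb', htanh, ← Real.cosh_add_sinh, ← Real.cosh_sub_sinh]
  set c := Real.cosh t with hc
  set s := Real.sinh t with hs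
  clear_value c s
  have hcne : c ≠ 0 := ne_of_gt hch
  field_simp
  linear_combination (4 * qy ^ 2) * hpyth
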